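/- If X and Y are independent standard normal random variables, then the random variables R = √(X²+Y²) and Θ = atan2(Y,X) are independent, with joint density f(r,θ) = (r/2π)·exp(-r²/2); whereas if X and Y are independent standard Laplace random variables, then R₁ = |X|+|Y| and the L^1 pseudo-angle Q are independent, with joint density f(r,q) = (r/4)·exp(-r). -/

import Mathlib

open MeasureTheory Set

/-- Standard bivariate normal density (independent standard normal margins). -/
noncomputable def normDens (p : ℝ × ℝ) : ℝ :=
  (1 / (2 * Real.pi)) * Real.exp (-(p.1 ^ 2 + p.2 ^ 2) / 2)

/-- Density of two independent standard Laplace variables. -/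
noncomputable def lapDens (p : ℝ × ℝ) : ℝ :=
  (1 / 4) * Real.exp (-(|p.1| + |p.2|))

/-- Standard polar coordinates `(R, Θ)` with `R = √(x²+y²)`, `Θ = atan2(y,x)`. -/
noncomputable def polarMap (p : ℝ × ℝ) : ℝ × ℝ :=
  (Real.sqrt (p.1 ^ 2 + p.2 ^ 2), Complex.arg ⟨p.1, p.2⟩)

/-- `L¹` polar coordinates `(R₁, Q)` with `R₁ = |x|+|y|` and `Q` the `L¹` pseudo-angle
`Q = ε(y)·(1 - x/(|x|+|y|))`. -/
noncomputable def l1PolarMap (p : ℝ × ℝ) : ℝ × ℝ :=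
  (|p.1| + |p.2|, (if 0 ≤ p.2 then (1 : ℝ) else -1) * (1 - p.1 / (|p.1| + |p.2|)))





lemma meas_l1PolarMap : Measurable l1PolarMap := by
  apply Measurable.prod
  · exact (continuous_fst.abs.add continuous_snd.abs).measurable
  · apply Measurable.mul
    · exact Measurable.ite (measurableSet_le measurable_const measurable_snd)
        measurable_const measurable_const
    · exact (measurable_const.sub
        (measurable_fst.div (continuous_fst.abs.add continuous_snd.abs).measurable))

-- null sets
lemma line_null (c : ℝ) : volume {p : ℝ × ℝ | p.2 = c} = 0 := by
  have : {p : ℝ × ℝ | p.2 = c} = univ ×ˢ {c} := by ext ⟨x, y⟩; simp [eq_comm]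
  rw [this, Measure.volume_eq_prod, Measure.prod_prod, Real.volume_singleton, mul_zero]

lemma axes_null : volume {p : ℝ × ℝ | p.1 = 0 ∨ p.2 = 0} = 0 := by
  have : {p : ℝ × ℝ | p.1 = 0 ∨ p.2 = 0} = ({(0:ℝ)} ×ˢ (univ : Set ℝ)) ∪ (univ ×ˢ {(0:ℝ)}) := by
    ext ⟨x, y⟩; simp [eq_comm]
  rw [this, Measure.volume_eq_prod]
  apply measure_union_null
  · rw [Measure.prod_prod, Real.volume_singleton, zero_mul]
  · rw [Measure.prod_prod, Real.volume_singleton, mul_zero]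

lemma four_lines_null :
    volume {p : ℝ × ℝ | p.2 = -1 ∨ p.2 = 0 ∨ p.2 = 1 ∨ p.2 = 2} = 0 := by
  have : {p : ℝ × ℝ | p.2 = -1 ∨ p.2 = 0 ∨ p.2 = 1 ∨ p.2 = 2}
      = {p : ℝ × ℝ | p.2 = -1} ∪ ({p | p.2 = 0} ∪ ({p | p.2 = 1} ∪ {p | p.2 = 2})) := by
    ext ⟨x, y⟩; simp [or_assoc]
  rw [this]
  refine measure_union_null (line_null _) (measure_union_null (line_null _)
    (measure_union_null (line_null _) (line_null _)))


section
variable {T S : ℝ × ℝ → ℝ × ℝ} {U V : Set (ℝ × ℝ)}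

lemma piece_preimage (A : Set (ℝ × ℝ))
    (h1 : ∀ z ∈ U, T z ∈ V ∧ S (T z) = z) (h2 : ∀ w ∈ V, S w ∈ U ∧ T (S w) = w) :
    T ⁻¹' A ∩ U = S '' (A ∩ V) := by
  ext z
  constructor
  · rintro ⟨hz, hU⟩
    exact ⟨T z, ⟨hz, (h1 z hU).1⟩, (h1 z hU).2⟩
  · rintro ⟨w, ⟨hwA, hwV⟩, rfl⟩
    refine ⟨?_, (h2 w hwV).1⟩
    show T (S w) ∈ A
    rw [(h2 w hwV).2]; exact hwA

lemma injOn_of_piece (h2 : ∀ w ∈ V, S w ∈ U ∧ T (S w) = w) : InjOn S V :=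
  fun w hw w' hw' h => by rw [← (h2 w hw).2, ← (h2 w' hw').2, h]

end

def linS (a b c d : ℝ) : ℝ × ℝ → ℝ × ℝ := fun w => (w.1 * (a + b * w.2), w.1 * (c + d * w.2))

lemma hasFDerivAt_lin (a b c d : ℝ) (p : ℝ × ℝ) :
    HasFDerivAt (linS a b c d)
      (LinearMap.toContinuousLinearMap (Matrix.toLin (Module.Basis.finTwoProd ℝ) (Module.Basis.finTwoProd ℝ)
        !![a + b * p.2, p.1 * b; c + d * p.2, p.1 * d])) p := by
  rw [Matrix.toLin_finTwoProd_toContinuousLinearMap]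
  have h1 : HasDerivAt (fun x : ℝ => a + b * x) b p.2 := by
    simpa using ((hasDerivAt_id p.2).const_mul b).const_add a
  have h2 : HasDerivAt (fun x : ℝ => c + d * x) d p.2 := by
    simpa using ((hasDerivAt_id p.2).const_mul d).const_add c
  refine (HasFDerivAt.prodMk (𝕜 := ℝ)
    (hasFDerivAt_fst.mul (h1.comp_hasFDerivAt p hasFDerivAt_snd))
    (hasFDerivAt_fst.mul (h2.comp_hasFDerivAt p hasFDerivAt_snd))).congr_fderiv ?_
  ext <;>
  simp [smul_smul, add_comm, mul_comm]

lemma det_lin (a b c d : ℝ) (h : a * d - b * c = 1) (p : ℝ × ℝ) :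
    (LinearMap.toContinuousLinearMap (Matrix.toLin (Module.Basis.finTwoProd ℝ) (Module.Basis.finTwoProd ℝ)
        !![a + b * p.2, p.1 * b; c + d * p.2, p.1 * d])).det = p.1 := by
  simp only [LinearMap.det_toContinuousLinearMap, LinearMap.det_toLin, Matrix.det_fin_two_of]
  linear_combination p.1 * h

lemma piece_lint (a b c d : ℝ) (hdet : a * d - b * c = 1) {V : Set (ℝ × ℝ)}
    (hV : MeasurableSet V) (hinj : InjOn (linS a b c d) V) (g : ℝ × ℝ → ENNReal) :
    ∫⁻ x in linS a b c d '' V, g x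
      = ∫⁻ w in V, ENNReal.ofReal |w.1| * g (linS a b c d w) := by
  rw [lintegral_image_eq_lintegral_abs_det_fderiv_mul volume hV
    (fun x _ => (hasFDerivAt_lin a b c d x).hasFDerivWithinAt) hinj g]
  apply setLIntegral_congr_fun hV
  intro w _
  dsimp only
  rw [det_lin a b c d hdet w]



-- quadrant 1 : x>0, y>0, q ∈ (0,1), S = (r(1-q), rq) : a=1,b=-1,c=0,d=1
lemma q1_h1 : ∀ z ∈ Ioi (0:ℝ) ×ˢ Ioi (0:ℝ),
    l1PolarMap z ∈ Ioi (0:ℝ) ×ˢ Ioo (0:ℝ) 1 ∧ linS 1 (-1) 0 1 (l1PolarMap z) = z := by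
  rintro ⟨x, y⟩ ⟨hx, hy⟩
  simp only [mem_Ioi] at hx hy
  have hr : (0:ℝ) < x + y := by linarith
  have habs : |x| + |y| = x + y := by rw [abs_of_pos hx, abs_of_pos hy]
  have hq : l1PolarMap (x, y) = (x + y, 1 - x / (x + y)) := by
    simp [l1PolarMap, habs, hy.le, le_of_lt hy]
  rw [hq]
  constructor
  · refine ⟨hr, ?_, ?_⟩
    · simp only [mem_Ioi]; rw [sub_pos, div_lt_one hr]; linarith
    · show 1 - x / (x + y) < 1
      linarith [div_pos hx hr]
  · simp only [linS, Prod.mk.injEq]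
    constructor <;> field_simp <;> ring

lemma q1_h2 : ∀ w ∈ Ioi (0:ℝ) ×ˢ Ioo (0:ℝ) 1,
    linS 1 (-1) 0 1 w ∈ Ioi (0:ℝ) ×ˢ Ioi (0:ℝ) ∧ l1PolarMap (linS 1 (-1) 0 1 w) = w := by
  rintro ⟨r, q⟩ ⟨hr, hq0, hq1⟩
  simp only [mem_Ioi] at hr
  have hx : (0:ℝ) < r * (1 + -1 * q) := mul_pos hr (by linarith)
  have hy : (0:ℝ) < r * (0 + 1 * q) := mul_pos hr (by linarith)
  refine ⟨⟨hx, hy⟩, ?_⟩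
  simp only [l1PolarMap, linS, abs_of_pos hx, abs_of_pos hy]
  have hsum : r * (1 + -1 * q) + r * (0 + 1 * q) = r := by ring
  rw [hsum]; simp only [hy.le, ↓reduceIte]
  rw [Prod.mk.injEq]
  constructor <;> field_simp <;> ring

-- quadrant 2 : x<0, y>0, q ∈ (1,2), S = (r(1-q), r(2-q))
lemma q2_h1 : ∀ z ∈ Iio (0:ℝ) ×ˢ Ioi (0:ℝ),
    l1PolarMap z ∈ Ioi (0:ℝ) ×ˢ Ioo (1:ℝ) 2 ∧ linS 1 (-1) 2 (-1) (l1PolarMap z) = z := by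
  rintro ⟨x, y⟩ ⟨hx, hy⟩
  simp only [mem_Iio, mem_Ioi] at hx hy
  have hr : (0:ℝ) < -x + y := by linarith
  have hq : l1PolarMap (x, y) = (-x + y, 1 - x / (-x + y)) := by
    simp [l1PolarMap, abs_of_neg hx, abs_of_pos hy, hy.le]
  rw [hq]
  refine ⟨⟨hr, ?_, ?_⟩, ?_⟩
  · show 1 < 1 - x / (-x + y)
    have := div_neg_of_neg_of_pos hx hr; linarith
  · show 1 - x / (-x + y) < 2
    rw [show (2:ℝ) = 1 - -1 by norm_num, sub_lt_sub_iff_left, lt_div_iff₀ hr]; linarith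
  · simp only [linS, Prod.mk.injEq]
    constructor <;> field_simp <;> ring

lemma q2_h2 : ∀ w ∈ Ioi (0:ℝ) ×ˢ Ioo (1:ℝ) 2,
    linS 1 (-1) 2 (-1) w ∈ Iio (0:ℝ) ×ˢ Ioi (0:ℝ) ∧ l1PolarMap (linS 1 (-1) 2 (-1) w) = w := by
  rintro ⟨r, q⟩ ⟨hr, hq1, hq2⟩
  simp only [mem_Ioi] at hr
  have hx : r * (1 + -1 * q) < 0 := mul_neg_of_pos_of_neg hr (by linarith)
  have hy : (0:ℝ) < r * (2 + -1 * q) := mul_pos hr (by linarith)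
  refine ⟨⟨hx, hy⟩, ?_⟩
  simp only [l1PolarMap, linS, abs_of_neg hx, abs_of_pos hy]
  have hsum : -(r * (1 + -1 * q)) + r * (2 + -1 * q) = r := by ring
  rw [hsum]; simp only [hy.le, ↓reduceIte]; rw [Prod.mk.injEq]
  constructor <;> field_simp <;> ring

-- quadrant 3 : x<0, y<0, q ∈ (-2,-1), S = (r(1+q), r(-2-q))
lemma q3_h1 : ∀ z ∈ Iio (0:ℝ) ×ˢ Iio (0:ℝ),
    l1PolarMap z ∈ Ioi (0:ℝ) ×ˢ Ioo (-2:ℝ) (-1) ∧ linS 1 1 (-2) (-1) (l1PolarMap z) = z := by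
  rintro ⟨x, y⟩ ⟨hx, hy⟩
  simp only [mem_Iio] at hx hy
  have hr : (0:ℝ) < -x + -y := by linarith
  have hq : l1PolarMap (x, y) = (-x + -y, -(1 - x / (-x + -y))) := by
    simp [l1PolarMap, abs_of_neg hx, abs_of_neg hy, not_le.mpr hy]
  rw [hq]
  refine ⟨⟨hr, ?_, ?_⟩, ?_⟩
  · show -2 < -(1 - x / (-x + -y))
    have : (-1:ℝ) < x / (-x + -y) := by rw [lt_div_iff₀ hr]; linarith
    linarith
  · show -(1 - x / (-x + -y)) < -1
    have := div_neg_of_neg_of_pos hx hr; linarith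
  · simp only [linS, Prod.mk.injEq]
    constructor <;> field_simp <;> ring

lemma q3_h2 : ∀ w ∈ Ioi (0:ℝ) ×ˢ Ioo (-2:ℝ) (-1),
    linS 1 1 (-2) (-1) w ∈ Iio (0:ℝ) ×ˢ Iio (0:ℝ) ∧ l1PolarMap (linS 1 1 (-2) (-1) w) = w := by
  rintro ⟨r, q⟩ ⟨hr, hq1, hq2⟩
  simp only [mem_Ioi] at hr
  have hx : r * (1 + 1 * q) < 0 := mul_neg_of_pos_of_neg hr (by linarith)
  have hy : r * (-2 + -1 * q) < 0 := mul_neg_of_pos_of_neg hr (by linarith)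
  refine ⟨⟨hx, hy⟩, ?_⟩
  simp only [l1PolarMap, linS, abs_of_neg hx, abs_of_neg hy]
  have hsum : -(r * (1 + 1 * q)) + -(r * (-2 + -1 * q)) = r := by ring
  rw [hsum]; simp only [not_le.mpr hy, ↓reduceIte]; rw [Prod.mk.injEq]
  constructor <;> field_simp <;> ring

-- quadrant 4 : x>0, y<0, q ∈ (-1,0), S = (r(1+q), rq)
lemma q4_h1 : ∀ z ∈ Ioi (0:ℝ) ×ˢ Iio (0:ℝ),
    l1PolarMap z ∈ Ioi (0:ℝ) ×ˢ Ioo (-1:ℝ) 0 ∧ linS 1 1 0 1 (l1PolarMap z) = z := by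
  rintro ⟨x, y⟩ ⟨hx, hy⟩
  simp only [mem_Iio, mem_Ioi] at hx hy
  have hr : (0:ℝ) < x + -y := by linarith
  have hq : l1PolarMap (x, y) = (x + -y, -(1 - x / (x + -y))) := by
    simp [l1PolarMap, abs_of_pos hx, abs_of_neg hy, not_le.mpr hy]
  rw [hq]
  refine ⟨⟨hr, ?_, ?_⟩, ?_⟩
  · show -1 < -(1 - x / (x + -y))
    have : (0:ℝ) < x / (x + -y) := div_pos hx hr
    linarith
  · show -(1 - x / (x + -y)) < 0
    have : x / (x + -y) < 1 := by rw [div_lt_one hr]; linarith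
    linarith
  · simp only [linS, Prod.mk.injEq]
    constructor <;> field_simp <;> ring

lemma q4_h2 : ∀ w ∈ Ioi (0:ℝ) ×ˢ Ioo (-1:ℝ) 0,
    linS 1 1 0 1 w ∈ Ioi (0:ℝ) ×ˢ Iio (0:ℝ) ∧ l1PolarMap (linS 1 1 0 1 w) = w := by
  rintro ⟨r, q⟩ ⟨hr, hq1, hq2⟩
  simp only [mem_Ioi] at hr
  have hx : (0:ℝ) < r * (1 + 1 * q) := mul_pos hr (by linarith)
  have hy : r * (0 + 1 * q) < 0 := mul_neg_of_pos_of_neg hr (by linarith)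
  refine ⟨⟨hx, hy⟩, ?_⟩
  simp only [l1PolarMap, linS, abs_of_pos hx, abs_of_neg hy]
  have hsum : r * (1 + 1 * q) + -(r * (0 + 1 * q)) = r := by ring
  rw [hsum]; simp only [not_le.mpr hy, ↓reduceIte]; rw [Prod.mk.injEq]
  constructor <;> field_simp <;> ring

lemma ae_inter {s t : Set (ℝ × ℝ)} (h : volume tᶜ = 0) : s =ᵐ[volume] ((s ∩ t : Set (ℝ × ℝ))) := by
  rw [MeasureTheory.ae_eq_set]
  refine ⟨measure_mono_null (fun x hx hxt => hx.2 ⟨hx.1, hxt⟩) h, ?_⟩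
  have he : (s ∩ t) \ s = ∅ := by ext x; simp; tauto
  rw [he]; exact measure_empty

lemma lap_piece (a b c d : ℝ) (hdet : a * d - b * c = 1) {U V : Set (ℝ × ℝ)}
    (hV : MeasurableSet V)
    (h1 : ∀ z ∈ U, l1PolarMap z ∈ V ∧ linS a b c d (l1PolarMap z) = z)
    (h2 : ∀ w ∈ V, linS a b c d w ∈ U ∧ l1PolarMap (linS a b c d w) = w)
    (hVpos : ∀ w ∈ V, 0 < w.1)
    {A : Set (ℝ × ℝ)} (hA : MeasurableSet A) :
    ∫⁻ x in l1PolarMap ⁻¹' A ∩ U, ENNReal.ofReal (lapDens x)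
      = ∫⁻ w in A ∩ V, ENNReal.ofReal (w.1 / 4 * Real.exp (-w.1)) := by
  rw [piece_preimage A h1 h2,
    piece_lint a b c d hdet (hA.inter hV) ((injOn_of_piece h2).mono inter_subset_right)]
  apply setLIntegral_congr_fun (hA.inter hV)
  intro w hw
  dsimp only
  obtain ⟨hwA, hwV⟩ := hw
  have hw1 : 0 < w.1 := hVpos w hwV
  have hr : |(linS a b c d w).1| + |(linS a b c d w).2| = w.1 := by
    have h := congrArg Prod.fst (h2 w hwV).2
    simpa [l1PolarMap] using h
  rw [abs_of_pos hw1]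
  unfold lapDens
  rw [hr, ← ENNReal.ofReal_mul hw1.le]
  congr 1
  ring

lemma dIoiIio : Disjoint (Ioi (0:ℝ)) (Iio 0) := by
  rw [Set.disjoint_left]; intro x hx hx'; exact absurd (mem_Iio.mp hx') (not_lt.mpr (le_of_lt (mem_Ioi.mp hx)))

lemma dIoo {a b c d : ℝ} (h : b ≤ c) : Disjoint (Ioo a b) (Ioo c d) := by
  rw [Set.disjoint_left]; rintro x ⟨_, hb⟩ ⟨hc, _⟩; linarith

lemma lap_map :
    Measure.map l1PolarMap (Measure.withDensity volume (fun p => ENNReal.ofReal (lapDens p)))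
      = Measure.withDensity volume (fun x : ℝ × ℝ => ENNReal.ofReal
          (if 0 < x.1 ∧ -2 < x.2 ∧ x.2 ≤ 2 then x.1 / 4 * Real.exp (-x.1) else 0)) := by
  ext A hA
  rw [Measure.map_apply meas_l1PolarMap hA, withDensity_apply _ (meas_l1PolarMap hA),
    withDensity_apply _ hA]
  set B := l1PolarMap ⁻¹' A with hBdef
  have hBm : MeasurableSet B := meas_l1PolarMap hA
  have hU1 : MeasurableSet (Ioi (0:ℝ) ×ˢ Ioi (0:ℝ)) := measurableSet_Ioi.prod measurableSet_Ioi
  have hU2 : MeasurableSet (Iio (0:ℝ) ×ˢ Ioi (0:ℝ)) := measurableSet_Iio.prod measurableSet_Ioi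
  have hU3 : MeasurableSet (Iio (0:ℝ) ×ˢ Iio (0:ℝ)) := measurableSet_Iio.prod measurableSet_Iio
  have hU4 : MeasurableSet (Ioi (0:ℝ) ×ˢ Iio (0:ℝ)) := measurableSet_Ioi.prod measurableSet_Iio
  have hV1 : MeasurableSet (Ioi (0:ℝ) ×ˢ Ioo (0:ℝ) 1) := measurableSet_Ioi.prod measurableSet_Ioo
  have hV2 : MeasurableSet (Ioi (0:ℝ) ×ˢ Ioo (1:ℝ) 2) := measurableSet_Ioi.prod measurableSet_Ioo
  have hV3 : MeasurableSet (Ioi (0:ℝ) ×ˢ Ioo (-2:ℝ) (-1)) :=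
    measurableSet_Ioi.prod measurableSet_Ioo
  have hV4 : MeasurableSet (Ioi (0:ℝ) ×ˢ Ioo (-1:ℝ) 0) := measurableSet_Ioi.prod measurableSet_Ioo
  -- LHS split into quadrants
  have hLHS : ∫⁻ x in B, ENNReal.ofReal (lapDens x)
      = (∫⁻ x in B ∩ Ioi 0 ×ˢ Ioi 0, ENNReal.ofReal (lapDens x))
        + ((∫⁻ x in B ∩ Iio 0 ×ˢ Ioi 0, ENNReal.ofReal (lapDens x))
          + ((∫⁻ x in B ∩ Iio 0 ×ˢ Iio 0, ENNReal.ofReal (lapDens x))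
            + (∫⁻ x in B ∩ Ioi 0 ×ˢ Iio 0, ENNReal.ofReal (lapDens x)))) := by
    have hcompl : volume ((Ioi 0 ×ˢ Ioi 0 ∪ (Iio 0 ×ˢ Ioi 0 ∪ (Iio 0 ×ˢ Iio 0 ∪
        Ioi 0 ×ˢ Iio (0:ℝ))) : Set (ℝ × ℝ)))ᶜ = 0 := by
      refine measure_mono_null ?_ axes_null
      intro p hp
      simp only [mem_compl_iff, mem_union, mem_prod, mem_Ioi, mem_Iio] at hp
      simp only [mem_setOf_eq]
      by_contra hcon
      push_neg at hcon
      obtain ⟨h1, h2⟩ := hcon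
      rcases (Ne.lt_or_gt h1) with ha | ha <;> rcases (Ne.lt_or_gt h2) with hb | hb
      · exact hp (Or.inr (Or.inr (Or.inl ⟨ha, hb⟩)))
      · exact hp (Or.inr (Or.inl ⟨ha, hb⟩))
      · exact hp (Or.inr (Or.inr (Or.inr ⟨ha, hb⟩)))
      · exact hp (Or.inl ⟨ha, hb⟩)
    calc ∫⁻ x in B, ENNReal.ofReal (lapDens x)
        = ∫⁻ x in B ∩ (Ioi 0 ×ˢ Ioi 0 ∪ (Iio 0 ×ˢ Ioi 0 ∪ (Iio 0 ×ˢ Iio 0 ∪ Ioi 0 ×ˢ Iio 0))),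
            ENNReal.ofReal (lapDens x) := setLIntegral_congr (ae_inter hcompl)
      _ = _ := by
          rw [inter_union_distrib_left, inter_union_distrib_left, inter_union_distrib_left]
          rw [lintegral_union (hBm.inter hU2 |>.union ((hBm.inter hU3).union (hBm.inter hU4))) ?d1,
            lintegral_union ((hBm.inter hU3).union (hBm.inter hU4)) ?d2,
            lintegral_union (hBm.inter hU4) ?d3]
          case d1 =>
            refine Disjoint.union_right ?_ (Disjoint.union_right ?_ ?_) <;>
              refine Disjoint.mono inter_subset_right inter_subset_right ?_
            · exact (Set.Disjoint.set_prod_left dIoiIio _ _)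
            · exact (Set.Disjoint.set_prod_left dIoiIio _ _)
            · exact (Set.Disjoint.set_prod_right dIoiIio _ _)
          case d2 =>
            refine Disjoint.union_right ?_ ?_ <;>
              refine Disjoint.mono inter_subset_right inter_subset_right ?_
            · exact (Set.Disjoint.set_prod_right dIoiIio _ _)
            · exact (Set.Disjoint.set_prod_left dIoiIio.symm _ _)
          case d3 =>
            exact Disjoint.mono inter_subset_right inter_subset_right
              (Set.Disjoint.set_prod_left dIoiIio.symm _ _)
  -- RHS split
  have hRHS : ∫⁻ x in A, ENNReal.ofReal
        (if 0 < x.1 ∧ -2 < x.2 ∧ x.2 ≤ 2 then x.1 / 4 * Real.exp (-x.1) else 0)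
      = (∫⁻ w in A ∩ Ioi 0 ×ˢ Ioo 0 1, ENNReal.ofReal (w.1 / 4 * Real.exp (-w.1)))
        + ((∫⁻ w in A ∩ Ioi 0 ×ˢ Ioo 1 2, ENNReal.ofReal (w.1 / 4 * Real.exp (-w.1)))
          + ((∫⁻ w in A ∩ Ioi 0 ×ˢ Ioo (-2) (-1), ENNReal.ofReal (w.1 / 4 * Real.exp (-w.1)))
            + (∫⁻ w in A ∩ Ioi 0 ×ˢ Ioo (-1) 0, ENNReal.ofReal (w.1 / 4 * Real.exp (-w.1))))) := by
    set W : Set (ℝ × ℝ) := Ioi 0 ×ˢ Ioo 0 1 ∪ (Ioi 0 ×ˢ Ioo 1 2 ∪ (Ioi 0 ×ˢ Ioo (-2) (-1) ∪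
      Ioi 0 ×ˢ Ioo (-1) 0)) with hWdef
    have hWm : MeasurableSet W := (hV1.union (hV2.union (hV3.union hV4)))
    have hae : ∀ᵐ x : ℝ × ℝ,
        ENNReal.ofReal (if 0 < x.1 ∧ -2 < x.2 ∧ x.2 ≤ 2 then x.1 / 4 * Real.exp (-x.1) else 0)
          = W.indicator (fun w => ENNReal.ofReal (w.1 / 4 * Real.exp (-w.1))) x := by
      have h4 := four_lines_null
      rw [← compl_mem_ae_iff] at h4
      filter_upwards [h4] with x hx
      simp only [mem_compl_iff, mem_setOf_eq] at hx
      push_neg at hx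
      obtain ⟨hm1, hm0, hp1, hp2⟩ := hx
      by_cases hE : 0 < x.1 ∧ -2 < x.2 ∧ x.2 ≤ 2
      · rw [if_pos hE]
        obtain ⟨he1, he2, he3⟩ := hE
        have hxW : x ∈ W := by
          simp only [hWdef, mem_union, mem_prod, mem_Ioi, mem_Ioo]
          by_cases hq1 : x.2 < -1
          · exact Or.inr (Or.inr (Or.inl ⟨he1, he2, hq1⟩))
          by_cases hq2 : x.2 < 0
          · exact Or.inr (Or.inr (Or.inr ⟨he1, lt_of_le_of_ne (not_lt.mp hq1) (Ne.symm hm1), hq2⟩))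
          by_cases hq3 : x.2 < 1
          · exact Or.inl ⟨he1, lt_of_le_of_ne (not_lt.mp hq2) (Ne.symm hm0), hq3⟩
          · exact Or.inr (Or.inl ⟨he1, lt_of_le_of_ne (not_lt.mp hq3) (Ne.symm hp1),
              lt_of_le_of_ne he3 hp2⟩)
        rw [indicator_of_mem hxW]
      · rw [if_neg hE, ENNReal.ofReal_zero]
        have hxW : x ∉ W := by
          intro hxW
          apply hE
          simp only [hWdef, mem_union, mem_prod, mem_Ioi, mem_Ioo] at hxW
          rcases hxW with ⟨h1, h2, h3⟩ | ⟨h1, h2, h3⟩ | ⟨h1, h2, h3⟩ | ⟨h1, h2, h3⟩ <;>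
            exact ⟨h1, by constructor <;> linarith⟩
        rw [indicator_of_notMem hxW]
    rw [lintegral_congr_ae (ae_restrict_of_ae hae), lintegral_indicator hWm,
      Measure.restrict_restrict hWm, inter_comm, inter_union_distrib_left,
      inter_union_distrib_left, inter_union_distrib_left]
    rw [lintegral_union (hA.inter hV2 |>.union ((hA.inter hV3).union (hA.inter hV4))) ?e1,
      lintegral_union ((hA.inter hV3).union (hA.inter hV4)) ?e2,
      lintegral_union (hA.inter hV4) ?e3]
    case e1 =>
      refine Disjoint.union_right ?_ (Disjoint.union_right ?_ ?_) <;>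
        refine Disjoint.mono inter_subset_right inter_subset_right ?_
      · exact Set.Disjoint.set_prod_right (dIoo le_rfl) _ _
      · exact (Set.Disjoint.set_prod_right (dIoo (by norm_num)).symm _ _)
      · exact (Set.Disjoint.set_prod_right (dIoo le_rfl).symm _ _)
    case e2 =>
      refine Disjoint.union_right ?_ ?_ <;>
        refine Disjoint.mono inter_subset_right inter_subset_right ?_
      · exact (Set.Disjoint.set_prod_right (dIoo (by norm_num)).symm _ _)
      · exact (Set.Disjoint.set_prod_right (dIoo (by norm_num)).symm _ _)
    case e3 =>
      exact Disjoint.mono inter_subset_right inter_subset_right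
        (Set.Disjoint.set_prod_right (dIoo le_rfl) _ _)
  rw [hLHS, hRHS,
    lap_piece 1 (-1) 0 1 (by norm_num) hV1 q1_h1 q1_h2 (fun w hw => hw.1) hA,
    lap_piece 1 (-1) 2 (-1) (by norm_num) hV2 q2_h1 q2_h2 (fun w hw => hw.1) hA,
    lap_piece 1 1 (-2) (-1) (by norm_num) hV3 q3_h1 q3_h2 (fun w hw => hw.1) hA,
    lap_piece 1 1 0 1 (by norm_num) hV4 q4_h1 q4_h2 (fun w hw => hw.1) hA]



lemma polarMap_eq : polarMap = polarCoord := rfl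

lemma meas_polarMap : Measurable polarMap := by
  apply Measurable.prod
  · exact ((continuous_fst.pow 2).add (continuous_snd.pow 2)).sqrt.measurable
  · exact Complex.measurable_arg.comp Complex.measurableEquivRealProd.symm.measurable

lemma pi_line_null : volume {p : ℝ × ℝ | p.2 = Real.pi} = 0 := by
  have : {p : ℝ × ℝ | p.2 = Real.pi} = univ ×ˢ {Real.pi} := by ext ⟨x, y⟩; simp [eq_comm]
  rw [this, Measure.volume_eq_prod, Measure.prod_prod, Real.volume_singleton, mul_zero]

lemma polar_map :
    Measure.map polarMap (Measure.withDensity volume (fun p => ENNReal.ofReal (normDens p)))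
      = Measure.withDensity volume (fun x : ℝ × ℝ => ENNReal.ofReal
          (if 0 < x.1 ∧ -Real.pi < x.2 ∧ x.2 ≤ Real.pi
            then x.1 / (2 * Real.pi) * Real.exp (-x.1 ^ 2 / 2) else 0)) := by
  ext A hA
  rw [Measure.map_apply meas_polarMap hA, withDensity_apply _ (meas_polarMap hA),
    withDensity_apply _ hA]
  have hsrc : volume polarCoord.sourceᶜ = 0 := ae_eq_univ.mp polarCoord_source_ae_eq_univ
  have h1 : ∀ z ∈ polarCoord.source,
      polarMap z ∈ polarCoord.target ∧ polarCoord.symm (polarMap z) = z := fun z hz =>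
    ⟨polarCoord.map_source hz, polarCoord.left_inv hz⟩
  have h2 : ∀ w ∈ polarCoord.target,
      polarCoord.symm w ∈ polarCoord.source ∧ polarMap (polarCoord.symm w) = w := fun w hw =>
    ⟨polarCoord.map_target hw, polarCoord.right_inv hw⟩
  have htm : MeasurableSet polarCoord.target := polarCoord.open_target.measurableSet
  -- LHS
  set B : ℝ × ℝ → ℝ × ℝ →L[ℝ] ℝ × ℝ := fun p =>
    LinearMap.toContinuousLinearMap (Matrix.toLin (Module.Basis.finTwoProd ℝ) (Module.Basis.finTwoProd ℝ)
      !![Real.cos p.2, -p.1 * Real.sin p.2; Real.sin p.2, p.1 * Real.cos p.2]) with hBdef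
  have hB_det : ∀ p : ℝ × ℝ, (B p).det = p.1 := by
    intro p
    conv_rhs => rw [← one_mul p.1, ← Real.cos_sq_add_sin_sq p.2]
    simp only [hBdef, neg_mul, LinearMap.det_toContinuousLinearMap, LinearMap.det_toLin,
      Matrix.det_fin_two_of, sub_neg_eq_add]
    ring
  have hLHS : ∫⁻ x in polarMap ⁻¹' A, ENNReal.ofReal (normDens x)
      = ∫⁻ w in A ∩ polarCoord.target,
          ENNReal.ofReal (w.1 / (2 * Real.pi) * Real.exp (-w.1 ^ 2 / 2)) := by
    calc ∫⁻ x in polarMap ⁻¹' A, ENNReal.ofReal (normDens x)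
        = ∫⁻ x in polarMap ⁻¹' A ∩ polarCoord.source, ENNReal.ofReal (normDens x) :=
          setLIntegral_congr (ae_inter hsrc)
      _ = ∫⁻ x in polarCoord.symm '' (A ∩ polarCoord.target), ENNReal.ofReal (normDens x) := by
          rw [piece_preimage A h1 h2]
      _ = ∫⁻ w in A ∩ polarCoord.target,
            ENNReal.ofReal |(B w).det| * ENNReal.ofReal (normDens (polarCoord.symm w)) := by
          exact lintegral_image_eq_lintegral_abs_det_fderiv_mul volume (hA.inter htm)
            (fun w _ => (hasFDerivAt_polarCoord_symm w).hasFDerivWithinAt)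
            ((injOn_of_piece h2).mono inter_subset_right) _
      _ = _ := by
          apply setLIntegral_congr_fun (hA.inter htm)
          intro w hw
          dsimp only
          obtain ⟨hwA, hw1, hw2⟩ := hw
          rw [hB_det w, abs_of_pos hw1]
          have hsq : (polarCoord.symm w).1 ^ 2 + (polarCoord.symm w).2 ^ 2 = w.1 ^ 2 := by
            simp only [polarCoord_symm_apply]
            nlinarith [Real.sin_sq_add_cos_sq w.2]
          rw [normDens, hsq, ← ENNReal.ofReal_mul (le_of_lt hw1)]
          congr 1
          ring
  -- RHS
  have hRHS : ∫⁻ x in A, ENNReal.ofReal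
        (if 0 < x.1 ∧ -Real.pi < x.2 ∧ x.2 ≤ Real.pi
          then x.1 / (2 * Real.pi) * Real.exp (-x.1 ^ 2 / 2) else 0)
      = ∫⁻ w in A ∩ polarCoord.target,
          ENNReal.ofReal (w.1 / (2 * Real.pi) * Real.exp (-w.1 ^ 2 / 2)) := by
    have hae : ∀ᵐ x : ℝ × ℝ, ENNReal.ofReal
        (if 0 < x.1 ∧ -Real.pi < x.2 ∧ x.2 ≤ Real.pi
          then x.1 / (2 * Real.pi) * Real.exp (-x.1 ^ 2 / 2) else 0)
        = polarCoord.target.indicator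
            (fun w => ENNReal.ofReal (w.1 / (2 * Real.pi) * Real.exp (-w.1 ^ 2 / 2))) x := by
      have h4 := pi_line_null
      rw [← compl_mem_ae_iff] at h4
      filter_upwards [h4] with x hx
      simp only [mem_compl_iff, mem_setOf_eq] at hx
      by_cases hE : 0 < x.1 ∧ -Real.pi < x.2 ∧ x.2 ≤ Real.pi
      · rw [if_pos hE]
        have hxW : x ∈ polarCoord.target :=
          ⟨hE.1, hE.2.1, lt_of_le_of_ne hE.2.2 hx⟩
        rw [indicator_of_mem hxW]
      · rw [if_neg hE, ENNReal.ofReal_zero]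
        have hxW : x ∉ polarCoord.target := by
          intro hxW
          exact hE ⟨hxW.1, hxW.2.1, le_of_lt hxW.2.2⟩
        rw [indicator_of_notMem hxW]
    rw [lintegral_congr_ae (ae_restrict_of_ae hae), lintegral_indicator htm,
      Measure.restrict_restrict htm, inter_comm]
  rw [hLHS, hRHS]

lemma map_fst_withDensity (D : ℝ × ℝ → ENNReal) (hD : Measurable D) :
    Measure.map Prod.fst (Measure.withDensity volume D)
      = Measure.withDensity volume (fun x => ∫⁻ y, D (x, y)) := by
  ext A hA
  rw [Measure.map_apply measurable_fst hA, withDensity_apply _ (measurable_fst hA),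
    withDensity_apply _ hA]
  have hpre : Prod.fst ⁻¹' A = A ×ˢ (univ : Set ℝ) := by ext ⟨x, y⟩; simp
  rw [hpre]
  rw [show (volume : Measure (ℝ × ℝ)).restrict (A ×ˢ (univ : Set ℝ))
      = (volume.restrict A).prod (volume.restrict univ) by
    rw [Measure.prod_restrict, ← Measure.volume_eq_prod]]
  rw [Measure.restrict_univ, lintegral_prod _ hD.aemeasurable]

lemma map_snd_withDensity (D : ℝ × ℝ → ENNReal) (hD : Measurable D) :
    Measure.map Prod.snd (Measure.withDensity volume D)
      = Measure.withDensity volume (fun y => ∫⁻ x, D (x, y)) := by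
  ext A hA
  rw [Measure.map_apply measurable_snd hA, withDensity_apply _ (measurable_snd hA),
    withDensity_apply _ hA]
  have hpre : Prod.snd ⁻¹' A = (univ : Set ℝ) ×ˢ A := by ext ⟨x, y⟩; simp
  rw [hpre]
  rw [show (volume : Measure (ℝ × ℝ)).restrict ((univ : Set ℝ) ×ˢ A)
      = (volume.restrict univ).prod (volume.restrict A) by
    rw [Measure.prod_restrict, ← Measure.volume_eq_prod]]
  rw [Measure.restrict_univ, lintegral_prod_symm _ hD.aemeasurable]

lemma withDensity_prod_eq (f g : ℝ → ENNReal) (hf : Measurable f) (hg : Measurable g)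
    (hffin : ∫⁻ x, f x ≠ ⊤) (hgfin : ∫⁻ y, g y ≠ ⊤) :
    (Measure.withDensity volume f).prod (Measure.withDensity volume g)
      = Measure.withDensity volume (fun p : ℝ × ℝ => f p.1 * g p.2) := by
  haveI hF : IsFiniteMeasure (Measure.withDensity volume f) :=
    ⟨by rw [withDensity_apply _ MeasurableSet.univ, setLIntegral_univ,
        lt_top_iff_ne_top]; exact hffin⟩
  haveI hG : IsFiniteMeasure (Measure.withDensity volume g) :=
    ⟨by rw [withDensity_apply _ MeasurableSet.univ, setLIntegral_univ,
        lt_top_iff_ne_top]; exact hgfin⟩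
  apply Measure.prod_eq
  intro s t hs ht
  rw [withDensity_apply _ (hs.prod ht), withDensity_apply _ hs, withDensity_apply _ ht]
  rw [show (volume : Measure (ℝ × ℝ)).restrict (s ×ˢ t)
      = (volume.restrict s).prod (volume.restrict t) by
    rw [Measure.prod_restrict, ← Measure.volume_eq_prod]]
  exact lintegral_prod_mul hf.aemeasurable hg.aemeasurable


lemma int_exp_sq_aux :
    ContinuousOn (fun r : ℝ => -Real.exp (-r^2/2)) (Ici 0) ∧
    (∀ x ∈ Ioi (0:ℝ), HasDerivAt (fun r => -Real.exp (-r^2/2)) (x * Real.exp (-x^2/2)) x) ∧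
    (∀ x ∈ Ioi (0:ℝ), 0 ≤ x * Real.exp (-x^2/2)) ∧
    Filter.Tendsto (fun r : ℝ => -Real.exp (-r^2/2)) Filter.atTop (nhds 0) := by
  refine ⟨(Continuous.neg (by continuity)).continuousOn, fun x _ => ?_, fun x hx =>
    mul_nonneg (le_of_lt hx) (Real.exp_pos _).le, ?_⟩
  · have h : HasDerivAt (fun r : ℝ => -r^2/2) (-x) x := by
      have := (hasDerivAt_pow 2 x).neg.div_const 2
      refine this.congr_deriv ?_; push_cast; ring
    have := (h.exp).neg
    refine this.congr_deriv ?_; ring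
  · rw [show (0:ℝ) = -0 by ring]
    have h : Filter.Tendsto (fun r : ℝ => -r^2/2) Filter.atTop Filter.atBot := by
      apply Filter.Tendsto.atBot_div_const two_pos
      exact Filter.tendsto_neg_atBot_iff.mpr (Filter.tendsto_pow_atTop two_ne_zero)
    exact (Real.tendsto_exp_atBot.comp h).neg

lemma intOn_exp_sq : IntegrableOn (fun r : ℝ => r * Real.exp (-r^2/2)) (Ioi 0) := by
  obtain ⟨h1, h2, h3, h4⟩ := int_exp_sq_aux
  exact integrableOn_Ioi_deriv_of_nonneg (h1 0 self_mem_Ici) h2 h3 h4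

lemma lint_exp_sq : ∫⁻ r in Ioi (0:ℝ), ENNReal.ofReal (r * Real.exp (-r^2/2)) = 1 := by
  obtain ⟨h1, h2, h3, h4⟩ := int_exp_sq_aux
  rw [← ofReal_integral_eq_lintegral_ofReal intOn_exp_sq]
  · rw [integral_Ioi_of_hasDerivAt_of_nonneg (h1 0 self_mem_Ici) h2 h3 h4]
    norm_num
  · filter_upwards [ae_restrict_mem measurableSet_Ioi] with x hx using h3 x hx

lemma int_exp_aux :
    ContinuousOn (fun r : ℝ => -((r+1) * Real.exp (-r))) (Ici 0) ∧
    (∀ x ∈ Ioi (0:ℝ), HasDerivAt (fun r => -((r+1) * Real.exp (-r))) (x * Real.exp (-x)) x) ∧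
    (∀ x ∈ Ioi (0:ℝ), 0 ≤ x * Real.exp (-x)) ∧
    Filter.Tendsto (fun r : ℝ => -((r+1) * Real.exp (-r))) Filter.atTop (nhds 0) := by
  refine ⟨(Continuous.neg (by continuity)).continuousOn, fun x _ => ?_, fun x hx =>
    mul_nonneg (le_of_lt hx) (Real.exp_pos _).le, ?_⟩
  · have h : HasDerivAt (fun r : ℝ => -r) (-1 : ℝ) x := (hasDerivAt_id x).neg
    have := (((hasDerivAt_id x).add_const 1).mul h.exp).neg
    refine this.congr_deriv ?_
    rw [Real.exp_neg]
    field_simp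
    simp only [id]; ring
  · rw [show (0:ℝ) = -0 by ring]
    apply Filter.Tendsto.neg
    have h1 : Filter.Tendsto (fun r : ℝ => r * Real.exp (-r)) Filter.atTop (nhds 0) := by
      simpa using Real.tendsto_pow_mul_exp_neg_atTop_nhds_zero 1
    have h2 : Filter.Tendsto (fun r : ℝ => Real.exp (-r)) Filter.atTop (nhds 0) :=
      Real.tendsto_exp_atBot.comp (Filter.tendsto_neg_atBot_iff.mpr Filter.tendsto_id)
    have := h1.add h2
    simp only [add_zero] at this
    convert this using 2 with r
    ring

lemma intOn_exp : IntegrableOn (fun r : ℝ => r * Real.exp (-r)) (Ioi 0) := by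
  obtain ⟨h1, h2, h3, h4⟩ := int_exp_aux
  exact integrableOn_Ioi_deriv_of_nonneg (h1 0 self_mem_Ici) h2 h3 h4

lemma lint_exp : ∫⁻ r in Ioi (0:ℝ), ENNReal.ofReal (r * Real.exp (-r)) = 1 := by
  obtain ⟨h1, h2, h3, h4⟩ := int_exp_aux
  rw [← ofReal_integral_eq_lintegral_ofReal intOn_exp]
  · rw [integral_Ioi_of_hasDerivAt_of_nonneg (h1 0 self_mem_Ici) h2 h3 h4]
    norm_num
  · filter_upwards [ae_restrict_mem measurableSet_Ioi] with x hx using h3 x hx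


noncomputable def lapD : ℝ × ℝ → ENNReal := fun x =>
  ENNReal.ofReal (if 0 < x.1 ∧ -2 < x.2 ∧ x.2 ≤ 2 then x.1 / 4 * Real.exp (-x.1) else 0)

noncomputable def gL : ℝ → ENNReal := fun r =>
  ENNReal.ofReal (if 0 < r then r * Real.exp (-r) else 0)

noncomputable def hL : ℝ → ENNReal := fun q =>
  ENNReal.ofReal (if -2 < q ∧ q ≤ 2 then (1:ℝ)/4 else 0)

lemma meas_lapD : Measurable lapD := by
  apply ENNReal.measurable_ofReal.comp
  apply Measurable.ite
  · exact (measurableSet_lt measurable_const measurable_fst).inter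
      ((measurableSet_lt measurable_const measurable_snd).inter
        (measurableSet_le measurable_snd measurable_const))
  · exact ((measurable_fst.div_const 4).mul (measurable_fst.neg.exp))
  · exact measurable_const

lemma meas_gL : Measurable gL := by
  apply ENNReal.measurable_ofReal.comp
  exact Measurable.ite measurableSet_Ioi (measurable_id.mul measurable_id.neg.exp)
    measurable_const

lemma meas_hL : Measurable hL := by
  apply ENNReal.measurable_ofReal.comp
  apply Measurable.ite ?_ measurable_const measurable_const
  exact (measurableSet_lt measurable_const measurable_id).inter
    (measurableSet_le measurable_id measurable_const)

lemma lap_marg1 : (fun x : ℝ => ∫⁻ y : ℝ, lapD (x, y)) = gL := by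
  funext x
  simp only [lapD, gL]
  by_cases hx : 0 < x
  · have hre : (fun y : ℝ => ENNReal.ofReal
        (if 0 < (x, y).1 ∧ -2 < (x, y).2 ∧ (x, y).2 ≤ 2 then (x, y).1 / 4 * Real.exp (-(x, y).1)
          else 0))
        = fun y => (Ioc (-2:ℝ) 2).indicator
            (fun _ => ENNReal.ofReal (x / 4 * Real.exp (-x))) y := by
      funext y
      by_cases hy : -2 < y ∧ y ≤ 2
      · rw [if_pos ⟨hx, hy⟩, indicator_of_mem (mem_Ioc.mpr hy)]
      · rw [if_neg (fun h => hy h.2), indicator_of_notMem (fun h => hy (mem_Ioc.mp h)),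
          ENNReal.ofReal_zero]
    rw [hre, lintegral_indicator measurableSet_Ioc, setLIntegral_const, Real.volume_Ioc,
      if_pos hx, ← ENNReal.ofReal_mul (by positivity)]
    congr 1
    norm_num
    ring
  · have hre : (fun y : ℝ => ENNReal.ofReal
        (if 0 < (x, y).1 ∧ -2 < (x, y).2 ∧ (x, y).2 ≤ 2 then (x, y).1 / 4 * Real.exp (-(x, y).1)
          else 0)) = fun _ => 0 := by
      funext y
      rw [if_neg (fun h => hx h.1), ENNReal.ofReal_zero]
    rw [hre, lintegral_const, zero_mul, if_neg hx, ENNReal.ofReal_zero]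

lemma lap_marg2 : (fun y : ℝ => ∫⁻ x : ℝ, lapD (x, y)) = hL := by
  funext y
  simp only [lapD, hL]
  by_cases hy : -2 < y ∧ y ≤ 2
  · have hre : (fun x : ℝ => ENNReal.ofReal
        (if 0 < (x, y).1 ∧ -2 < (x, y).2 ∧ (x, y).2 ≤ 2 then (x, y).1 / 4 * Real.exp (-(x, y).1)
          else 0))
        = fun x => (Ioi (0:ℝ)).indicator
            (fun x => ENNReal.ofReal ((1:ℝ)/4) * ENNReal.ofReal (x * Real.exp (-x))) x := by
      funext x
      by_cases hx : 0 < x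
      · rw [if_pos ⟨hx, hy⟩, indicator_of_mem (mem_Ioi.mpr hx),
          ← ENNReal.ofReal_mul (by norm_num)]
        congr 1
        ring
      · rw [if_neg (fun h => hx h.1), indicator_of_notMem (fun h => hx (mem_Ioi.mp h)),
          ENNReal.ofReal_zero]
    have hm : Measurable fun a : ℝ => ENNReal.ofReal (a * Real.exp (-a)) :=
      (measurable_id.mul measurable_id.neg.exp).ennreal_ofReal
    rw [hre, lintegral_indicator measurableSet_Ioi, if_pos hy,
      lintegral_const_mul _ hm, lint_exp, mul_one]
  · have hre : (fun x : ℝ => ENNReal.ofReal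
        (if 0 < (x, y).1 ∧ -2 < (x, y).2 ∧ (x, y).2 ≤ 2 then (x, y).1 / 4 * Real.exp (-(x, y).1)
          else 0)) = fun _ => 0 := by
      funext x
      rw [if_neg (fun h => hy h.2), ENNReal.ofReal_zero]
    rw [hre, lintegral_const, zero_mul, if_neg hy, ENNReal.ofReal_zero]

lemma lint_gL : ∫⁻ r, gL r = 1 := by
  have hre : gL = fun r => (Ioi (0:ℝ)).indicator
      (fun r => ENNReal.ofReal (r * Real.exp (-r))) r := by
    funext r
    simp only [gL]
    by_cases hr : 0 < r
    · rw [if_pos hr, indicator_of_mem (mem_Ioi.mpr hr)]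
    · rw [if_neg hr, indicator_of_notMem (fun h => hr (mem_Ioi.mp h)), ENNReal.ofReal_zero]
  rw [hre, lintegral_indicator measurableSet_Ioi, lint_exp]

lemma lint_hL : ∫⁻ q, hL q = 1 := by
  have hre : hL = fun q => (Ioc (-2:ℝ) 2).indicator (fun _ => ENNReal.ofReal ((1:ℝ)/4)) q := by
    funext q
    simp only [hL]
    by_cases hq : -2 < q ∧ q ≤ 2
    · rw [if_pos hq, indicator_of_mem (mem_Ioc.mpr hq)]
    · rw [if_neg hq, indicator_of_notMem (fun h => hq (mem_Ioc.mp h)), ENNReal.ofReal_zero]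
  rw [hre, lintegral_indicator measurableSet_Ioc, setLIntegral_const, Real.volume_Ioc,
    ← ENNReal.ofReal_mul (by norm_num)]
  norm_num

lemma lap_prod_dens : (fun p : ℝ × ℝ => gL p.1 * hL p.2) = lapD := by
  funext p
  simp only [gL, hL, lapD]
  by_cases h1 : 0 < p.1
  · by_cases h2 : -2 < p.2 ∧ p.2 ≤ 2
    · rw [if_pos h1, if_pos h2, if_pos ⟨h1, h2⟩, ← ENNReal.ofReal_mul (by positivity)]
      congr 1
      ring
    · rw [if_neg h2, if_neg (fun h : 0 < p.1 ∧ -2 < p.2 ∧ p.2 ≤ 2 => h2 h.2), ENNReal.ofReal_zero, mul_zero]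
  · rw [if_neg h1, if_neg (fun h : 0 < p.1 ∧ -2 < p.2 ∧ p.2 ≤ 2 => h1 h.1), ENNReal.ofReal_zero, zero_mul]

noncomputable def normD : ℝ × ℝ → ENNReal := fun x =>
  ENNReal.ofReal (if 0 < x.1 ∧ -Real.pi < x.2 ∧ x.2 ≤ Real.pi
    then x.1 / (2 * Real.pi) * Real.exp (-x.1 ^ 2 / 2) else 0)

noncomputable def gN : ℝ → ENNReal := fun r =>
  ENNReal.ofReal (if 0 < r then r * Real.exp (-r ^ 2 / 2) else 0)

noncomputable def hN : ℝ → ENNReal := fun q =>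
  ENNReal.ofReal (if -Real.pi < q ∧ q ≤ Real.pi then 1 / (2 * Real.pi) else 0)

lemma meas_normD : Measurable normD := by
  apply ENNReal.measurable_ofReal.comp
  apply Measurable.ite
  · exact (measurableSet_lt measurable_const measurable_fst).inter
      ((measurableSet_lt measurable_const measurable_snd).inter
        (measurableSet_le measurable_snd measurable_const))
  · exact ((measurable_fst.div_const _).mul
      (((measurable_fst.pow_const 2).neg.div_const 2).exp))
  · exact measurable_const

lemma meas_gN : Measurable gN := by
  apply ENNReal.measurable_ofReal.comp
  exact Measurable.ite measurableSet_Ioi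
    (measurable_id.mul (((measurable_id.pow_const 2).neg.div_const 2).exp)) measurable_const

lemma meas_hN : Measurable hN := by
  apply ENNReal.measurable_ofReal.comp
  apply Measurable.ite ?_ measurable_const measurable_const
  exact (measurableSet_lt measurable_const measurable_id).inter
    (measurableSet_le measurable_id measurable_const)

lemma norm_marg1 : (fun x : ℝ => ∫⁻ y : ℝ, normD (x, y)) = gN := by
  funext x
  simp only [normD, gN]
  by_cases hx : 0 < x
  · have hre : (fun y : ℝ => ENNReal.ofReal
        (if 0 < (x, y).1 ∧ -Real.pi < (x, y).2 ∧ (x, y).2 ≤ Real.pi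
          then (x, y).1 / (2 * Real.pi) * Real.exp (-(x, y).1 ^ 2 / 2) else 0))
        = fun y => (Ioc (-Real.pi) Real.pi).indicator
            (fun _ => ENNReal.ofReal (x / (2 * Real.pi) * Real.exp (-x ^ 2 / 2))) y := by
      funext y
      by_cases hy : -Real.pi < y ∧ y ≤ Real.pi
      · rw [if_pos ⟨hx, hy⟩, indicator_of_mem (mem_Ioc.mpr hy)]
      · rw [if_neg (fun h => hy h.2), indicator_of_notMem (fun h => hy (mem_Ioc.mp h)),
          ENNReal.ofReal_zero]
    rw [hre, lintegral_indicator measurableSet_Ioc, setLIntegral_const, Real.volume_Ioc,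
      if_pos hx, ← ENNReal.ofReal_mul (by positivity)]
    congr 1
    field_simp
    ring
  · have hre : (fun y : ℝ => ENNReal.ofReal
        (if 0 < (x, y).1 ∧ -Real.pi < (x, y).2 ∧ (x, y).2 ≤ Real.pi
          then (x, y).1 / (2 * Real.pi) * Real.exp (-(x, y).1 ^ 2 / 2) else 0)) = fun _ => 0 := by
      funext y
      rw [if_neg (fun h => hx h.1), ENNReal.ofReal_zero]
    rw [hre, lintegral_const, zero_mul, if_neg hx, ENNReal.ofReal_zero]

lemma norm_marg2 : (fun y : ℝ => ∫⁻ x : ℝ, normD (x, y)) = hN := by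
  funext y
  simp only [normD, hN]
  by_cases hy : -Real.pi < y ∧ y ≤ Real.pi
  · have hre : (fun x : ℝ => ENNReal.ofReal
        (if 0 < (x, y).1 ∧ -Real.pi < (x, y).2 ∧ (x, y).2 ≤ Real.pi
          then (x, y).1 / (2 * Real.pi) * Real.exp (-(x, y).1 ^ 2 / 2) else 0))
        = fun x => (Ioi (0:ℝ)).indicator
            (fun x => ENNReal.ofReal (1 / (2 * Real.pi))
              * ENNReal.ofReal (x * Real.exp (-x ^ 2 / 2))) x := by
      funext x
      by_cases hx : 0 < x
      · rw [if_pos ⟨hx, hy⟩, indicator_of_mem (mem_Ioi.mpr hx),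
          ← ENNReal.ofReal_mul (by positivity)]
        congr 1
        ring
      · rw [if_neg (fun h => hx h.1), indicator_of_notMem (fun h => hx (mem_Ioi.mp h)),
          ENNReal.ofReal_zero]
    have hm : Measurable fun a : ℝ => ENNReal.ofReal (a * Real.exp (-a ^ 2 / 2)) :=
      (measurable_id.mul (((measurable_id.pow_const 2).neg.div_const 2).exp)).ennreal_ofReal
    rw [hre, lintegral_indicator measurableSet_Ioi, if_pos hy,
      lintegral_const_mul _ hm, lint_exp_sq, mul_one]
  · have hre : (fun x : ℝ => ENNReal.ofReal
        (if 0 < (x, y).1 ∧ -Real.pi < (x, y).2 ∧ (x, y).2 ≤ Real.pi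
          then (x, y).1 / (2 * Real.pi) * Real.exp (-(x, y).1 ^ 2 / 2) else 0)) = fun _ => 0 := by
      funext x
      rw [if_neg (fun h => hy h.2), ENNReal.ofReal_zero]
    rw [hre, lintegral_const, zero_mul, if_neg hy, ENNReal.ofReal_zero]

lemma lint_gN : ∫⁻ r, gN r = 1 := by
  have hre : gN = fun r => (Ioi (0:ℝ)).indicator
      (fun r => ENNReal.ofReal (r * Real.exp (-r ^ 2 / 2))) r := by
    funext r
    simp only [gN]
    by_cases hr : 0 < r
    · rw [if_pos hr, indicator_of_mem (mem_Ioi.mpr hr)]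
    · rw [if_neg hr, indicator_of_notMem (fun h => hr (mem_Ioi.mp h)), ENNReal.ofReal_zero]
  rw [hre, lintegral_indicator measurableSet_Ioi, lint_exp_sq]

lemma lint_hN : ∫⁻ q, hN q = 1 := by
  have hre : hN = fun q => (Ioc (-Real.pi) Real.pi).indicator
      (fun _ => ENNReal.ofReal (1 / (2 * Real.pi))) q := by
    funext q
    simp only [hN]
    by_cases hq : -Real.pi < q ∧ q ≤ Real.pi
    · rw [if_pos hq, indicator_of_mem (mem_Ioc.mpr hq)]
    · rw [if_neg hq, indicator_of_notMem (fun h => hq (mem_Ioc.mp h)), ENNReal.ofReal_zero]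
  rw [hre, lintegral_indicator measurableSet_Ioc, setLIntegral_const, Real.volume_Ioc,
    ← ENNReal.ofReal_mul (by positivity)]
  rw [show 1 / (2 * Real.pi) * (Real.pi - -Real.pi) = 1 by field_simp; ring]
  exact ENNReal.ofReal_one

lemma norm_prod_dens : (fun p : ℝ × ℝ => gN p.1 * hN p.2) = normD := by
  funext p
  simp only [gN, hN, normD]
  by_cases h1 : 0 < p.1
  · by_cases h2 : -Real.pi < p.2 ∧ p.2 ≤ Real.pi
    · rw [if_pos h1, if_pos h2, if_pos ⟨h1, h2⟩, ← ENNReal.ofReal_mul (by positivity)]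
      congr 1
      ring
    · rw [if_neg h2,
        if_neg (fun h : 0 < p.1 ∧ -Real.pi < p.2 ∧ p.2 ≤ Real.pi => h2 h.2),
        ENNReal.ofReal_zero, mul_zero]
  · rw [if_neg h1,
      if_neg (fun h : 0 < p.1 ∧ -Real.pi < p.2 ∧ p.2 ≤ Real.pi => h1 h.1),
      ENNReal.ofReal_zero, zero_mul]


/-- If `X, Y` are independent standard normals, then `R = √(X²+Y²)` and `Θ = atan2(Y,X)` are
independent with joint density `(r/2π)·exp(-r²/2)`; if `X, Y` are independent standard Laplace,
then `R₁ = |X|+|Y|` and the `L¹` pseudo-angle `Q` are independent with joint density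
`(r/4)·exp(-r)`. -/
theorem stmt2 :
    (Measure.map polarMap (Measure.withDensity volume (fun p => ENNReal.ofReal (normDens p)))
      = Measure.withDensity volume (fun x : ℝ × ℝ => ENNReal.ofReal
          (if 0 < x.1 ∧ -Real.pi < x.2 ∧ x.2 ≤ Real.pi
            then x.1 / (2 * Real.pi) * Real.exp (-x.1 ^ 2 / 2) else 0))) ∧
    (Measure.map polarMap (Measure.withDensity volume (fun p => ENNReal.ofReal (normDens p)))
      = (Measure.map (fun p : ℝ × ℝ => Real.sqrt (p.1 ^ 2 + p.2 ^ 2))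
            (Measure.withDensity volume (fun p => ENNReal.ofReal (normDens p)))).prod
          (Measure.map (fun p : ℝ × ℝ => Complex.arg ⟨p.1, p.2⟩)
            (Measure.withDensity volume (fun p => ENNReal.ofReal (normDens p))))) ∧
    (Measure.map l1PolarMap (Measure.withDensity volume (fun p => ENNReal.ofReal (lapDens p)))
      = Measure.withDensity volume (fun x : ℝ × ℝ => ENNReal.ofReal
          (if 0 < x.1 ∧ -2 < x.2 ∧ x.2 ≤ 2
            then x.1 / 4 * Real.exp (-x.1) else 0))) ∧
    (Measure.map l1PolarMap (Measure.withDensity volume (fun p => ENNReal.ofReal (lapDens p)))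
      = (Measure.map (fun p : ℝ × ℝ => |p.1| + |p.2|)
            (Measure.withDensity volume (fun p => ENNReal.ofReal (lapDens p)))).prod
          (Measure.map (fun p : ℝ × ℝ =>
              (if 0 ≤ p.2 then (1 : ℝ) else -1) * (1 - p.1 / (|p.1| + |p.2|)))
            (Measure.withDensity volume (fun p => ENNReal.ofReal (lapDens p))))) := by
  
  refine ⟨polar_map, ?_, lap_map, ?_⟩
  · have e1 : (fun p : ℝ × ℝ => Real.sqrt (p.1 ^ 2 + p.2 ^ 2)) = Prod.fst ∘ polarMap := rfl
    have e2 : (fun p : ℝ × ℝ => Complex.arg ⟨p.1, p.2⟩) = Prod.snd ∘ polarMap := rfl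
    rw [e1, e2, ← Measure.map_map measurable_fst meas_polarMap,
      ← Measure.map_map measurable_snd meas_polarMap, polar_map,
      show (fun x : ℝ × ℝ => ENNReal.ofReal
        (if 0 < x.1 ∧ -Real.pi < x.2 ∧ x.2 ≤ Real.pi
          then x.1 / (2 * Real.pi) * Real.exp (-x.1 ^ 2 / 2) else 0)) = normD from rfl,
      map_fst_withDensity _ meas_normD, map_snd_withDensity _ meas_normD,
      norm_marg1, norm_marg2,
      withDensity_prod_eq gN hN meas_gN meas_hN
        (by rw [lint_gN]; exact ENNReal.one_ne_top) (by rw [lint_hN]; exact ENNReal.one_ne_top),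
      norm_prod_dens]
  · have e1 : (fun p : ℝ × ℝ => |p.1| + |p.2|) = Prod.fst ∘ l1PolarMap := rfl
    have e2 : (fun p : ℝ × ℝ =>
        (if 0 ≤ p.2 then (1 : ℝ) else -1) * (1 - p.1 / (|p.1| + |p.2|)))
        = Prod.snd ∘ l1PolarMap := rfl
    rw [e1, e2, ← Measure.map_map measurable_fst meas_l1PolarMap,
      ← Measure.map_map measurable_snd meas_l1PolarMap, lap_map,
      show (fun x : ℝ × ℝ => ENNReal.ofReal
        (if 0 < x.1 ∧ -2 < x.2 ∧ x.2 ≤ 2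
          then x.1 / 4 * Real.exp (-x.1) else 0)) = lapD from rfl,
      map_fst_withDensity _ meas_lapD, map_snd_withDensity _ meas_lapD,
      lap_marg1, lap_marg2,
      withDensity_prod_eq gL hL meas_gL meas_hL
        (by rw [lint_gL]; exact ENNReal.one_ne_top) (by rw [lint_hL]; exact ENNReal.one_ne_top),
      lap_prod_dens]
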